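/- For ω = 0 and all γ ∈ ℝ, the spectrum of the kagome operator satisfies: (1) σ_{−γ,0} = σ_{γ,0} (reflexion with respect to the axis γ = 0); (2) e ∈ σ_{8π−γ,0} if and only if −e ∈ σ_{γ,0} (reflexion with respect to the point (4π,0)). -/

import Mathlib

/- STATEMENT 12: for `ω = 0`, `σ_{−γ,0} = σ_{γ,0}` (reflexion w.r.t. the axis `γ=0`) and
`e ∈ σ_{8π−γ,0} ↔ −e ∈ σ_{γ,0}` (reflexion w.r.t. the point `(4π,0)`). -/

open Complex Matrix

noncomputable section

/-- `ℓ²(ℤ²;ℂ³)`. -/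
abbrev KH : Type := lp (fun _ : ℤ × ℤ => EuclideanSpace ℂ (Fin 3)) 2

/-- `Q` is the kagome operator `Q_{γ,ω}`, written entrywise: the three components of
`ℂ³` correspond to the labels `1,3,5` of the kagome lattice, the magnetic translations are
`(τ₁v)_α = v_{α₁−1,α₂}`, `(τ₂v)_α = e^{iγα₁}v_{α₁,α₂−1}`, and `Q_{γ,ω}` has zero diagonal
blocks and off-diagonal blocks `Q₁₂ = e^{i(ω+γ/8)}(τ₁* + e^{−iγ/2}τ₁*τ₂)`,
`Q₁₃ = e^{−i(ω+γ/8)}(τ₁* + τ₂*)`, `Q₂₁ = e^{−i(ω+γ/8)}(τ₁ + e^{−iγ/2}τ₁τ₂*)`,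
`Q₂₃ = e^{i(ω+γ/8)}(e^{−iγ/2}τ₁τ₂* + τ₂*)`, `Q₃₁ = e^{i(ω+γ/8)}(τ₁ + τ₂)`,
`Q₃₂ = e^{−i(ω+γ/8)}(e^{−iγ/2}τ₁*τ₂ + τ₂)`. -/
def IsKagome (γ ω : ℝ) (Q : KH →L[ℂ] KH) : Prop :=
  ∀ v : KH, ∀ a b : ℤ,
    (Q v) (a, b) 0 =
        Complex.exp (Complex.I * ((ω : ℂ) + (γ : ℂ)/8)) *
          (v (a+1, b) 1 +
            Complex.exp (Complex.I * (-((γ : ℂ)/2) + (γ : ℂ) * ((a : ℂ)+1))) * v (a+1, b-1) 1)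
      + Complex.exp (-(Complex.I * ((ω : ℂ) + (γ : ℂ)/8))) *
          (v (a+1, b) 2 + Complex.exp (-(Complex.I * (γ : ℂ) * (a : ℂ))) * v (a, b+1) 2)
    ∧
    (Q v) (a, b) 1 =
        Complex.exp (-(Complex.I * ((ω : ℂ) + (γ : ℂ)/8))) *
          (v (a-1, b) 0 +
            Complex.exp (Complex.I * (-((γ : ℂ)/2) - (γ : ℂ) * ((a : ℂ)-1))) * v (a-1, b+1) 0)
      + Complex.exp (Complex.I * ((ω : ℂ) + (γ : ℂ)/8)) *
          (Complex.exp (Complex.I * (-((γ : ℂ)/2) - (γ : ℂ) * ((a : ℂ)-1))) * v (a-1, b+1) 2 +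
            Complex.exp (-(Complex.I * (γ : ℂ) * (a : ℂ))) * v (a, b+1) 2)
    ∧
    (Q v) (a, b) 2 =
        Complex.exp (Complex.I * ((ω : ℂ) + (γ : ℂ)/8)) *
          (v (a-1, b) 0 + Complex.exp (Complex.I * (γ : ℂ) * (a : ℂ)) * v (a, b-1) 0)
      + Complex.exp (-(Complex.I * ((ω : ℂ) + (γ : ℂ)/8))) *
          (Complex.exp (Complex.I * (-((γ : ℂ)/2) + (γ : ℂ) * ((a : ℂ)+1))) * v (a+1, b-1) 1 +
            Complex.exp (Complex.I * (γ : ℂ) * (a : ℂ)) * v (a, b-1) 1)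

open scoped ENNReal

namespace Stmt12Aux

def σe : ℤ × ℤ ≃ ℤ × ℤ where
  toFun p := (-p.2, -p.1)
  invFun p := (-p.2, -p.1)
  left_inv p := by simp
  right_inv p := by simp

def πe : Fin 3 ≃ Fin 3 := Equiv.swap 0 2

@[simp] lemma σe_apply (p : ℤ × ℤ) : σe p = (-p.2, -p.1) := rfl
@[simp] lemma πe0 : πe 0 = 2 := rfl
@[simp] lemma πe1 : πe 1 = 1 := rfl
@[simp] lemma πe2 : πe 2 = 0 := rfl

def ph (γ : ℝ) (p : ℤ × ℤ) : ℂ := Complex.exp ((-(γ * p.1 * p.2) : ℝ) * Complex.I)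

lemma norm_ph (γ : ℝ) (p : ℤ × ℤ) : ‖ph γ p‖ = 1 := Complex.norm_exp_ofReal_mul_I _

lemma ph_mul (γ : ℝ) (p : ℤ × ℤ) : ph (-γ) p * ph γ (σe p) = 1 := by
  rw [ph, ph, ← Complex.exp_add, ← Complex.exp_zero]
  congr 1
  simp only [σe_apply]
  push_cast
  ring

def Ufun (γ : ℝ) (v : ∀ _ : ℤ × ℤ, EuclideanSpace ℂ (Fin 3)) :
    ∀ _ : ℤ × ℤ, EuclideanSpace ℂ (Fin 3) :=
  fun p => WithLp.toLp 2 (fun j => ph γ p * v (σe p) (πe j))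

lemma hp2 : 0 < (2 : ℝ≥0∞).toReal := by norm_num

lemma norm_Ufun (γ : ℝ) (v : ∀ _ : ℤ × ℤ, EuclideanSpace ℂ (Fin 3)) (p : ℤ × ℤ) :
    ‖Ufun γ v p‖ = ‖v (σe p)‖ := by
  rw [EuclideanSpace.norm_eq, EuclideanSpace.norm_eq]
  congr 1
  rw [← Equiv.sum_comp πe (fun j => ‖v (σe p) j‖ ^ 2)]
  refine Finset.sum_congr rfl fun j _ => ?_
  rw [show Ufun γ v p j = ph γ p * v (σe p) (πe j) from rfl, norm_mul, norm_ph, one_mul]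

lemma memℓp_Ufun (γ : ℝ) (v : KH) : Memℓp (Ufun γ ⇑v) 2 := by
  apply memℓp_gen
  have hs : Summable fun q : ℤ × ℤ =>
      ‖(v : ∀ _ : ℤ × ℤ, EuclideanSpace ℂ (Fin 3)) q‖ ^ (2 : ℝ≥0∞).toReal :=
    (memℓp_gen_iff hp2).1 (lp.memℓp v)
  refine ((σe.summable_iff
    (f := fun q : ℤ × ℤ => ‖(v : ∀ _ : ℤ × ℤ, EuclideanSpace ℂ (Fin 3)) q‖ ^
      (2 : ℝ≥0∞).toReal)).2 hs).congr fun p => ?_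
  simp only [Function.comp_apply]
  rw [norm_Ufun]

def Ulin (γ : ℝ) : KH →ₗ[ℂ] KH where
  toFun v := ⟨Ufun γ ⇑v, memℓp_Ufun γ v⟩
  map_add' v w := by
    refine lp.ext (funext fun p => PiLp.ext fun j => ?_)
    simp [Ufun, lp.coeFn_add, Pi.add_apply, mul_add]
    rfl
  map_smul' c v := by
    refine lp.ext (funext fun p => PiLp.ext fun j => ?_)
    simp [Ufun, lp.coeFn_smul, Pi.smul_apply, smul_eq_mul]
    ring

lemma norm_Ulin (γ : ℝ) (v : KH) : ‖Ulin γ v‖ = ‖v‖ := by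
  rw [lp.norm_eq_tsum_rpow hp2, lp.norm_eq_tsum_rpow hp2]
  congr 1
  rw [← σe.tsum_eq (fun q : ℤ × ℤ =>
    ‖(v : ∀ _ : ℤ × ℤ, EuclideanSpace ℂ (Fin 3)) q‖ ^ (2 : ℝ≥0∞).toReal)]
  refine tsum_congr fun p => ?_
  have : ((Ulin γ v : KH) : ∀ _ : ℤ × ℤ, EuclideanSpace ℂ (Fin 3)) p = Ufun γ ⇑v p := rfl
  rw [this, norm_Ufun]

def Uop (γ : ℝ) : KH →L[ℂ] KH :=
  (Ulin γ).mkContinuous 1 (fun v => by rw [norm_Ulin, one_mul])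

lemma Uop_apply (γ : ℝ) (v : KH) (p : ℤ × ℤ) (j : Fin 3) :
    (Uop γ v) p j = ph γ p * (v : ∀ _ : ℤ × ℤ, EuclideanSpace ℂ (Fin 3)) (σe p) (πe j) := rfl

lemma Uop_mul_Uop_neg (γ : ℝ) : Uop γ * Uop (-γ) = 1 := by
  refine ContinuousLinearMap.ext fun v => lp.ext (funext fun p => PiLp.ext fun j => ?_)
  show (Uop γ (Uop (-γ) v)) p j = v p j
  rw [Uop_apply, Uop_apply]
  have h1 : σe (σe p) = p := by simp
  have h2 : πe (πe j) = j := Equiv.swap_apply_self _ _ _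
  rw [h1, h2, ← mul_assoc]
  have := ph_mul (-γ) p
  rw [neg_neg] at this
  rw [this, one_mul]

lemma Uop_neg_mul_Uop (γ : ℝ) : Uop (-γ) * Uop γ = 1 := by
  refine ContinuousLinearMap.ext fun v => lp.ext (funext fun p => PiLp.ext fun j => ?_)
  show (Uop (-γ) (Uop γ v)) p j = v p j
  rw [Uop_apply, Uop_apply]
  have h1 : σe (σe p) = p := by simp
  have h2 : πe (πe j) = j := Equiv.swap_apply_self _ _ _
  rw [h1, h2, ← mul_assoc, ph_mul, one_mul]

def Uu (γ : ℝ) : (KH →L[ℂ] KH)ˣ where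
  val := Uop γ
  inv := Uop (-γ)
  val_inv := Uop_mul_Uop_neg γ
  inv_val := Uop_neg_mul_Uop γ


lemma conj_eq (γ : ℝ) (Q Q₂ : KH →L[ℂ] KH) (h : IsKagome γ 0 Q) (h₂ : IsKagome (-γ) 0 Q₂) :
    Q₂ * Uop γ = Uop γ * Q := by
  refine ContinuousLinearMap.ext fun v => lp.ext (funext fun p => ?_)
  obtain ⟨a, b⟩ := p
  have K0 : (Q₂ (Uop γ v)) (a, b) 0 = (Uop γ (Q v)) (a, b) 0 := by
    rw [(h₂ (Uop γ v) a b).1, Uop_apply]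
    simp only [Uop_apply, σe_apply, πe0, πe1, πe2]
    rw [(h v (-b) (-a)).2.2]
    simp only [ph]
    push_cast
    simp only [mul_add, add_mul, ← mul_assoc, ← Complex.exp_add]
    ring_nf
  have K1 : (Q₂ (Uop γ v)) (a, b) 1 = (Uop γ (Q v)) (a, b) 1 := by
    rw [(h₂ (Uop γ v) a b).2.1, Uop_apply]
    simp only [Uop_apply, σe_apply, πe0, πe1, πe2]
    rw [(h v (-b) (-a)).2.1]
    simp only [ph]
    push_cast
    simp only [mul_add, add_mul, ← mul_assoc, ← Complex.exp_add]
    ring_nf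
  have K2 : (Q₂ (Uop γ v)) (a, b) 2 = (Uop γ (Q v)) (a, b) 2 := by
    rw [(h₂ (Uop γ v) a b).2.2, Uop_apply]
    simp only [Uop_apply, σe_apply, πe0, πe1, πe2]
    rw [(h v (-b) (-a)).1]
    simp only [ph]
    push_cast
    simp only [mul_add, add_mul, ← mul_assoc, ← Complex.exp_add]
    ring_nf
  refine PiLp.ext fun j => ?_
  fin_cases j
  · exact K0
  · exact K1
  · exact K2


lemma exp_add_odd (x y : ℂ) (n : ℤ) (hxy : x = y + (2*(n:ℂ)+1) * (Real.pi * Complex.I)) :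
    Complex.exp x = -Complex.exp y := by
  rw [hxy, Complex.exp_add,
    show (2*(n:ℂ)+1) * ((Real.pi : ℂ) * Complex.I)
      = (n:ℂ) * (2*(Real.pi:ℂ)*Complex.I) + (Real.pi:ℂ)*Complex.I by ring,
    Complex.exp_add, Complex.exp_int_mul_two_pi_mul_I, one_mul, Complex.exp_pi_mul_I]
  ring

lemma exp_add_even (x y : ℂ) (n : ℤ) (hxy : x = y + (n:ℂ) * (2 * Real.pi * Complex.I)) :
    Complex.exp x = Complex.exp y := by
  rw [hxy, Complex.exp_add, Complex.exp_int_mul_two_pi_mul_I, mul_one]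

lemma neg_rel (γ : ℝ) (Q₂ Q₃ : KH →L[ℂ] KH) (h₂ : IsKagome (-γ) 0 Q₂)
    (h₃ : IsKagome (8 * Real.pi - γ) 0 Q₃) : Q₃ = -Q₂ := by
  have E1 : Complex.exp (Complex.I * (((0:ℝ) : ℂ) + ((8 * Real.pi - γ : ℝ) : ℂ)/8))
      = -Complex.exp (Complex.I * (((0:ℝ) : ℂ) + ((-γ : ℝ) : ℂ)/8)) :=
    exp_add_odd _ _ 0 (by push_cast; ring)
  have E2 : Complex.exp (-(Complex.I * (((0:ℝ) : ℂ) + ((8 * Real.pi - γ : ℝ) : ℂ)/8)))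
      = -Complex.exp (-(Complex.I * (((0:ℝ) : ℂ) + ((-γ : ℝ) : ℂ)/8))) :=
    exp_add_odd _ _ (-1) (by push_cast; ring)
  refine ContinuousLinearMap.ext fun v => lp.ext (funext fun p => ?_)
  obtain ⟨a, b⟩ := p
  have K0 : (Q₃ v) (a, b) 0 = -((Q₂ v) (a, b) 0) := by
    have E3 : Complex.exp (Complex.I * (-(((8 * Real.pi - γ : ℝ) : ℂ)/2)
          + ((8 * Real.pi - γ : ℝ) : ℂ) * ((a : ℂ)+1)))
        = Complex.exp (Complex.I * (-(((-γ : ℝ) : ℂ)/2) + ((-γ : ℝ) : ℂ) * ((a : ℂ)+1))) :=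
      exp_add_even _ _ (4*a+2) (by push_cast; ring)
    have E4 : Complex.exp (-(Complex.I * ((8 * Real.pi - γ : ℝ) : ℂ) * (a : ℂ)))
        = Complex.exp (-(Complex.I * ((-γ : ℝ) : ℂ) * (a : ℂ))) :=
      exp_add_even _ _ (-4*a) (by push_cast; ring)
    rw [(h₃ v a b).1, (h₂ v a b).1, E1, E2, E3, E4]
    ring
  have K1 : (Q₃ v) (a, b) 1 = -((Q₂ v) (a, b) 1) := by
    have E3 : Complex.exp (Complex.I * (-(((8 * Real.pi - γ : ℝ) : ℂ)/2)
          - ((8 * Real.pi - γ : ℝ) : ℂ) * ((a : ℂ)-1)))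
        = Complex.exp (Complex.I * (-(((-γ : ℝ) : ℂ)/2) - ((-γ : ℝ) : ℂ) * ((a : ℂ)-1))) :=
      exp_add_even _ _ (2-4*a) (by push_cast; ring)
    have E4 : Complex.exp (-(Complex.I * ((8 * Real.pi - γ : ℝ) : ℂ) * (a : ℂ)))
        = Complex.exp (-(Complex.I * ((-γ : ℝ) : ℂ) * (a : ℂ))) :=
      exp_add_even _ _ (-4*a) (by push_cast; ring)
    rw [(h₃ v a b).2.1, (h₂ v a b).2.1, E1, E2, E3, E4]
    ring
  have K2 : (Q₃ v) (a, b) 2 = -((Q₂ v) (a, b) 2) := by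
    have E3 : Complex.exp (Complex.I * (-(((8 * Real.pi - γ : ℝ) : ℂ)/2)
          + ((8 * Real.pi - γ : ℝ) : ℂ) * ((a : ℂ)+1)))
        = Complex.exp (Complex.I * (-(((-γ : ℝ) : ℂ)/2) + ((-γ : ℝ) : ℂ) * ((a : ℂ)+1))) :=
      exp_add_even _ _ (4*a+2) (by push_cast; ring)
    have E4 : Complex.exp (Complex.I * ((8 * Real.pi - γ : ℝ) : ℂ) * (a : ℂ))
        = Complex.exp (Complex.I * ((-γ : ℝ) : ℂ) * (a : ℂ)) :=
      exp_add_even _ _ (4*a) (by push_cast; ring)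
    rw [(h₃ v a b).2.2, (h₂ v a b).2.2, E1, E2, E3, E4]
    ring
  have : ((-Q₂ : KH →L[ℂ] KH) v) (a, b) = -((Q₂ v) (a, b)) := rfl
  rw [this]
  refine PiLp.ext fun j => ?_
  fin_cases j
  · exact K0
  · exact K1
  · exact K2

end Stmt12Aux

theorem stmt12 (γ : ℝ) (Q Q₂ Q₃ : KH →L[ℂ] KH)
    (h : IsKagome γ 0 Q)
    (h₂ : IsKagome (-γ) 0 Q₂)
    (h₃ : IsKagome (8 * Real.pi - γ) 0 Q₃) :
    spectrum ℂ Q₂ = spectrum ℂ Q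
    ∧ (∀ e : ℂ, e ∈ spectrum ℂ Q₃ ↔ -e ∈ spectrum ℂ Q) := by
  open Stmt12Aux in
  have hconj : Q₂ = (Uu γ : KH →L[ℂ] KH) * Q * ((Uu γ)⁻¹ : (KH →L[ℂ] KH)ˣ) := by
    have hc := Stmt12Aux.conj_eq γ Q Q₂ h h₂
    calc Q₂ = Q₂ * ((Uu γ : KH →L[ℂ] KH) * ((Uu γ)⁻¹ : (KH →L[ℂ] KH)ˣ)) := by
          rw [Units.mul_inv, mul_one]
      _ = (Q₂ * Stmt12Aux.Uop γ) * ((Uu γ)⁻¹ : (KH →L[ℂ] KH)ˣ) := by rw [← mul_assoc]; rfl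
      _ = (Stmt12Aux.Uop γ * Q) * ((Uu γ)⁻¹ : (KH →L[ℂ] KH)ˣ) := by rw [hc]
      _ = (Uu γ : KH →L[ℂ] KH) * Q * ((Uu γ)⁻¹ : (KH →L[ℂ] KH)ˣ) := rfl
  have h1 : spectrum ℂ Q₂ = spectrum ℂ Q := by
    rw [hconj]; exact spectrum.units_conjugate
  refine ⟨h1, fun e => ?_⟩
  rw [Stmt12Aux.neg_rel γ Q₂ Q₃ h₂ h₃, ← spectrum.neg_eq, Set.mem_neg, h1]


end
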